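/- Let $V_i = V_i^1 \oplus V_i^2$ for $i=1,\dots,d$ with $d\geq 2$, let $T_1 \in V_1^1 \otimes \cdots \otimes V_d^1$ and $T_2 \in V_1^2 \otimes \cdots \otimes V_d^2$. Then the slice rank of $T_1 + T_2$ is at least the slice rank of $T_1$ plus the slice rank of $T_2$. -/

import Mathlib

open scoped TensorProduct BigOperators

/-- Slice rank of a tensor in a tensor product of vector spaces. -/
noncomputable def tensorSliceRank (F : Type*) [Field F] {d : ℕ} (V : Fin d → Type*)
    [∀ i, AddCommGroup (V i)] [∀ i, Module F (V i)] (T : ⨂[F] i, V i) : ℕ :=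
  sInf {r | ∃ S : Fin r → ⨂[F] i, V i,
    (∀ j, ∃ i : Fin d, ∃ u : V i,
      S j ∈ Submodule.span F {t | ∃ v : ∀ k, V k, v i = u ∧ t = PiTensorProduct.tprod F v}) ∧
    T = ∑ j, S j}

section Eval

variable {F : Type*} [Field F] {d : ℕ} {V : Fin d → Type*}
  [∀ i, AddCommGroup (V i)] [∀ i, Module F (V i)]

/-- Evaluation of a pi tensor product against a family of dual functionals. -/
noncomputable def teval (x : ∀ i, Module.Dual F (V i)) : Module.Dual F (⨂[F] i, V i) :=
  PiTensorProduct.lift ((MultilinearMap.mkPiAlgebra F (Fin d) F).compLinearMap x)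

lemma teval_tprod (x : ∀ i, Module.Dual F (V i)) (v : ∀ i, V i) :
    teval x (PiTensorProduct.tprod F v) = ∏ i, x i (v i) := by
  simp [teval]

lemma teval_eq_zero_of_exists (x : ∀ i, Module.Dual F (V i)) (T : ⨂[F] i, V i)
    (i : Fin d) (hx : x i = 0) : teval x T = 0 := by
  have h : ((MultilinearMap.mkPiAlgebra F (Fin d) F).compLinearMap x) = 0 := by
    ext v
    simp only [MultilinearMap.compLinearMap_apply, MultilinearMap.mkPiAlgebra_apply,
      MultilinearMap.zero_apply]
    exact Finset.prod_eq_zero (Finset.mem_univ i) (by simp [hx])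
  simp [teval, h]

lemma teval_map {W : Fin d → Type*} [∀ i, AddCommGroup (W i)] [∀ i, Module F (W i)]
    (x : ∀ i, Module.Dual F (V i)) (f : ∀ i, W i →ₗ[F] V i) (t : ⨂[F] i, W i) :
    teval x (PiTensorProduct.map f t) = teval (fun i => (x i).comp (f i)) t := by
  induction t using PiTensorProduct.induction_on with
  | smul_tprod c v => simp [teval_tprod]
  | add a b ha hb => simp [map_add, ha, hb]

lemma teval_slice_eq_zero (x : ∀ i, Module.Dual F (V i)) (i : Fin d) (u : V i)
    (hx : x i u = 0) (S : ⨂[F] i, V i)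
    (hS : S ∈ Submodule.span F {t | ∃ v : ∀ k, V k, v i = u ∧ t = PiTensorProduct.tprod F v}) :
    teval x S = 0 := by
  have hsub : {t | ∃ v : ∀ k, V k, v i = u ∧ t = PiTensorProduct.tprod F v} ⊆
      ↑(LinearMap.ker (teval (F := F) x)) := by
    rintro t ⟨v, hv, rfl⟩
    simp only [SetLike.mem_coe, LinearMap.mem_ker, teval_tprod]
    exact Finset.prod_eq_zero (Finset.mem_univ i) (by rw [hv, hx])
  exact (Submodule.span_le.mpr hsub) hS

/-- Membership of the slice-rank set coming from an arbitrary finite indexed family. -/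
lemma sliceSet_mem_of_family {ι : Type*} [Fintype ι] (T : ⨂[F] i, V i)
    (S : ι → ⨂[F] i, V i)
    (hS : ∀ j, ∃ i : Fin d, ∃ u : V i,
      S j ∈ Submodule.span F {t | ∃ v : ∀ k, V k, v i = u ∧ t = PiTensorProduct.tprod F v})
    (hsum : T = ∑ j, S j) :
    tensorSliceRank F V T ≤ Fintype.card ι := by
  apply Nat.sInf_le
  refine ⟨S ∘ (Fintype.equivFin ι).symm, fun j => hS _, ?_⟩
  rw [hsum]
  exact (Equiv.sum_comp (Fintype.equivFin ι).symm S).symm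

/-- The key duality lemma: if `T` is annihilated by every product of functionals that
kill the subspaces `A i`, then the slice rank of `T` is at most `∑ finrank (A i)`. -/
lemma tensorSliceRank_le_of_vanishing [∀ i, FiniteDimensional F (V i)]
    (A : ∀ i, Submodule F (V i)) (T : ⨂[F] i, V i)
    (hT : ∀ x : ∀ i, Module.Dual F (V i),
      (∀ i, A i ≤ LinearMap.ker (x i)) → teval x T = 0) :
    tensorSliceRank F V T ≤ ∑ i, Module.finrank F (A i) := by
  classical
  have hC : ∀ i, ∃ C : Submodule F (V i), IsCompl (A i) C := fun i =>
    Submodule.exists_isCompl (A i)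
  set C : ∀ i, Submodule F (V i) := fun i => (hC i).choose with hCdef
  have hcompl : ∀ i, IsCompl (A i) (C i) := fun i => (hC i).choose_spec
  set a : Fin d → ℕ := fun i => Module.finrank F (A i)
  let bA : ∀ i, Module.Basis (Fin (a i)) F (A i) := fun i => Module.finBasis F (A i)
  let bC : ∀ i, Module.Basis (Fin (Module.finrank F (C i))) F (C i) := fun i => Module.finBasis F (C i)
  let b : ∀ i, Module.Basis (Fin (a i) ⊕ Fin (Module.finrank F (C i))) F (V i) := fun i =>
    ((bA i).prod (bC i)).map (Submodule.prodEquivOfIsCompl _ _ (hcompl i))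
  have hbl : ∀ i (k : Fin (a i)), b i (Sum.inl k) = ((bA i k : A i) : V i) := by
    intro i k
    simp [b, Module.Basis.prod_apply]
  have hAcoord : ∀ i (v : V i), v ∈ A i → ∀ k, (b i).repr v (Sum.inr k) = 0 := by
    intro i v hv k
    have : v = ∑ j, (bA i).repr ⟨v, hv⟩ j • b i (Sum.inl j) := by
      have h1 := (bA i).sum_repr ⟨v, hv⟩
      have := congrArg (Submodule.subtype (A i)) h1
      simp only [map_sum, map_smul] at this
      simpa [hbl] using this.symm
    rw [this]
    simp [Finsupp.single_apply]
  set κ := (∀ i, Fin (a i) ⊕ Fin (Module.finrank F (C i))) with hκ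
  have hmem : T ∈ Submodule.span F
      (Set.range fun s : κ => PiTensorProduct.tprod F (fun i => b i (s i))) := by
    have htop : (⊤ : Submodule F (⨂[F] i, V i)) ≤ Submodule.span F
        (Set.range fun s : κ => PiTensorProduct.tprod F (fun i => b i (s i))) := by
      rw [← PiTensorProduct.span_tprod_eq_top]
      rw [Submodule.span_le]
      rintro t ⟨v, rfl⟩
      have hv : v = fun i => ∑ k, (b i).repr (v i) k • b i k := by
        funext i; exact ((b i).sum_repr (v i)).symm
      rw [hv, (PiTensorProduct.tprod F).map_sum]
      apply Submodule.sum_mem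
      intro s _
      rw [(PiTensorProduct.tprod F).map_smul_univ]
      exact Submodule.smul_mem _ _ (Submodule.subset_span ⟨s, rfl⟩)
    exact htop Submodule.mem_top
  rw [Submodule.mem_span_range_iff_exists_fun] at hmem
  obtain ⟨c, hc⟩ := hmem
  have hbad : ∀ s : κ, (∀ i, (s i).isRight) → c s = 0 := by
    intro s hs
    have hx : ∀ i, A i ≤ LinearMap.ker ((b i).coord (s i)) := by
      intro i v hv
      obtain ⟨k, hk⟩ := Sum.isRight_iff.mp (hs i)
      simp only [LinearMap.mem_ker, Module.Basis.coord_apply]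
      rw [hk]
      exact hAcoord i v hv k
    have h0 := hT (fun i => (b i).coord (s i)) hx
    rw [← hc] at h0
    rw [map_sum] at h0
    have heval : ∀ s' : κ, teval (fun i => (b i).coord (s i))
        (c s' • PiTensorProduct.tprod F (fun i => b i (s' i)))
        = if s' = s then c s else 0 := by
      intro s'
      rw [map_smul, teval_tprod]
      by_cases h : s' = s
      · subst h
        simp [Module.Basis.repr_self]
      · obtain ⟨i, hi⟩ := Function.ne_iff.mp h
        rw [if_neg h, Finset.prod_eq_zero (Finset.mem_univ i)
          (by simp [Module.Basis.repr_self, Finsupp.single_apply, hi]), smul_zero]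
    rw [Finset.sum_congr rfl (fun s' _ => heval s')] at h0
    rw [Finset.sum_ite_eq' Finset.univ s (fun _ => c s)] at h0
    simpa using h0
  have hgood : ∀ s : κ, ¬ (∀ i, (s i).isRight) → ∃ i, ∃ k : Fin (a i), s i = Sum.inl k := by
    intro s hs
    push_neg at hs
    obtain ⟨i, hi⟩ := hs
    rcases hsi : s i with k | k
    · exact ⟨i, k, hsi⟩
    · exact absurd (by rw [hsi]; rfl) hi
  let tagfun : κ → Option ((i : Fin d) × Fin (a i)) := fun s =>
    if h : ∀ i, (s i).isRight then none
    else some ⟨(hgood s h).choose, (hgood s h).choose_spec.choose⟩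
  have htag : ∀ (s : κ) (j : (i : Fin d) × Fin (a i)),
      tagfun s = some j → s j.1 = Sum.inl j.2 := by
    intro s j hj
    by_cases h : ∀ i, (s i).isRight
    · simp [tagfun, h] at hj
    · simp only [tagfun, dif_neg h, Option.some.injEq] at hj
      subst hj
      exact (hgood s h).choose_spec.choose_spec
  let S : ((i : Fin d) × Fin (a i)) → ⨂[F] i, V i := fun j =>
    ∑ s ∈ Finset.univ.filter (fun s : κ => tagfun s = some j),
      c s • PiTensorProduct.tprod F (fun i => b i (s i))
  have hSmem : ∀ j : (i : Fin d) × Fin (a i), S j ∈ Submodule.span F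
      {t | ∃ v : ∀ k, V k, v j.1 = b j.1 (Sum.inl j.2) ∧ t = PiTensorProduct.tprod F v} := by
    intro j
    apply Submodule.sum_mem
    intro s hs
    simp only [Finset.mem_filter] at hs
    apply Submodule.smul_mem
    apply Submodule.subset_span
    exact ⟨fun i => b i (s i), congrArg _ (htag s j hs.2), rfl⟩
  have hsum : T = ∑ j : (i : Fin d) × Fin (a i), S j := by
    have h1 : ∑ o : Option ((i : Fin d) × Fin (a i)),
        ∑ s ∈ Finset.univ.filter (fun s : κ => tagfun s = o),
        c s • PiTensorProduct.tprod F (fun i => b i (s i))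
        = ∑ s : κ, c s • PiTensorProduct.tprod F (fun i => b i (s i)) :=
      Finset.sum_fiberwise _ _ _
    rw [Fintype.sum_option] at h1
    have h2 : ∑ s ∈ Finset.univ.filter (fun s : κ => tagfun s = none),
        c s • PiTensorProduct.tprod F (fun i => b i (s i)) = 0 := by
      apply Finset.sum_eq_zero
      intro s hs
      simp only [Finset.mem_filter] at hs
      have : ∀ i, (s i).isRight := by
        by_contra h
        simp [tagfun, dif_neg h] at hs
      rw [hbad s this, zero_smul]
    rw [h2, zero_add] at h1
    rw [← hc, ← h1]
  have hfin := sliceSet_mem_of_family T S (fun j => ⟨j.1, b j.1 (Sum.inl j.2), hSmem j⟩) hsum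
  simpa [Fintype.card_sigma] using hfin

/-- Any tensor admits a slice decomposition realizing its slice rank. -/
lemma exists_min_decomp (hd : 0 < d) (T : ⨂[F] i, V i) :
    ∃ S : Fin (tensorSliceRank F V T) → ⨂[F] i, V i,
      (∀ j, ∃ i : Fin d, ∃ u : V i,
        S j ∈ Submodule.span F {t | ∃ v : ∀ k, V k, v i = u ∧ t = PiTensorProduct.tprod F v}) ∧
      T = ∑ j, S j := by
  have hne : {r | ∃ S : Fin r → ⨂[F] i, V i,
      (∀ j, ∃ i : Fin d, ∃ u : V i,
        S j ∈ Submodule.span F {t | ∃ v : ∀ k, V k, v i = u ∧ t = PiTensorProduct.tprod F v}) ∧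
      T = ∑ j, S j}.Nonempty := by
    have hT : T ∈ Submodule.span F (Set.range (PiTensorProduct.tprod F (s := V))) := by
      rw [PiTensorProduct.span_tprod_eq_top]; trivial
    rw [Submodule.mem_span_set'] at hT
    obtain ⟨n, f, g, hg⟩ := hT
    refine ⟨n, fun j => f j • (g j : ⨂[F] i, V i), ?_, hg.symm⟩
    intro j
    obtain ⟨v, hv⟩ := (g j).2
    exact ⟨⟨0, hd⟩, v ⟨0, hd⟩,
      Submodule.smul_mem _ _ (Submodule.subset_span ⟨v, rfl, hv.symm⟩)⟩
  exact Nat.sInf_mem hne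

end Eval

section Helpers

variable {F : Type*} [Field F]

lemma exists_dual_extend {Vt : Type*} [AddCommGroup Vt] [Module F Vt]
    (p q : Submodule F Vt) (h : IsCompl p q) (U : Submodule F Vt) (x : Module.Dual F p)
    (hx : Submodule.comap p.subtype U ≤ LinearMap.ker x) :
    ∃ X : Module.Dual F Vt, U ≤ LinearMap.ker X ∧ X ∘ₗ p.subtype = x := by
  classical
  set πp := p.projectionOnto q h with hπp
  set πq := q.projectionOnto p h.symm with hπq
  set f : U →ₗ[F] F := x ∘ₗ (πp ∘ₗ U.subtype) with hf
  set g : U →ₗ[F] q := πq ∘ₗ U.subtype with hg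
  have hker : LinearMap.ker g ≤ LinearMap.ker f := by
    intro u hu
    simp only [LinearMap.mem_ker, hg, LinearMap.comp_apply] at hu
    have hup : (u : Vt) ∈ p := (Submodule.projectionOnto_apply_eq_zero_iff h.symm).mp hu
    have hproj : πp (u : Vt) = ⟨(u : Vt), hup⟩ :=
      Submodule.projectionOnto_apply_left h ⟨(u : Vt), hup⟩
    simp only [LinearMap.mem_ker, hf, LinearMap.comp_apply, Submodule.coe_subtype, hproj]
    exact hx (show (⟨(u : Vt), hup⟩ : p) ∈ Submodule.comap p.subtype U from u.2)
  set μ₀ : LinearMap.range g →ₗ[F] F :=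
    ((LinearMap.ker g).liftQ f hker) ∘ₗ (g.quotKerEquivRange.symm : LinearMap.range g →ₗ[F] _)
    with hμ₀
  obtain ⟨μ, hμ⟩ := LinearMap.exists_extend μ₀
  have hμ₀gu : ∀ u : U, μ (g u) = f u := by
    intro u
    have h1 : g.quotKerEquivRange (Submodule.Quotient.mk u) = ⟨g u, ⟨u, rfl⟩⟩ := by
      apply Subtype.ext
      exact g.quotKerEquivRange_apply_mk u
    calc μ (g u) = μ ((LinearMap.range g).subtype ⟨g u, ⟨u, rfl⟩⟩) := rfl
    _ = μ₀ ⟨g u, ⟨u, rfl⟩⟩ := by rw [← hμ]; rfl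
    _ = f u := by
        rw [hμ₀]
        simp only [LinearMap.comp_apply]
        rw [← h1, LinearEquiv.coe_coe, LinearEquiv.symm_apply_apply]
        exact Submodule.liftQ_apply _ f u
  refine ⟨x ∘ₗ πp - μ ∘ₗ πq, ?_, ?_⟩
  · intro u hu
    simp only [LinearMap.mem_ker, LinearMap.sub_apply, LinearMap.comp_apply,
      Submodule.coe_subtype]
    have h2 := hμ₀gu ⟨u, hu⟩
    simp only [hg, hf, LinearMap.comp_apply, Submodule.coe_subtype] at h2
    rw [sub_eq_zero]
    exact h2.symm
  · ext w
    simp only [LinearMap.comp_apply, LinearMap.sub_apply, Submodule.coe_subtype]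
    rw [Submodule.projectionOnto_apply_left h w,
      Submodule.projectionOnto_apply_right h.symm w]
    simp

lemma finrank_comap_subtype {Vt : Type*} [AddCommGroup Vt] [Module F Vt]
    [FiniteDimensional F Vt] (p N : Submodule F Vt) :
    Module.finrank F (Submodule.comap p.subtype N) = Module.finrank F ↥(N ⊓ p) := by
  have h1 : Submodule.map p.subtype (Submodule.comap p.subtype N) = N ⊓ p :=
    (Submodule.map_comap_subtype p N).trans (inf_comm p N)
  have h2 := LinearEquiv.finrank_eq
    (Submodule.equivMapOfInjective p.subtype p.injective_subtype (Submodule.comap p.subtype N))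
  rw [h2, h1]

/-- Rank-nullity for the projection onto `p` along `q`, restricted to `U`. -/
lemma finrank_proj_add {Vt : Type*} [AddCommGroup Vt] [Module F Vt] [FiniteDimensional F Vt]
    (p q : Submodule F Vt) (h : IsCompl p q) (U : Submodule F Vt) :
    Module.finrank F (Submodule.map (p.projectionOnto q h) U)
      + Module.finrank F (Submodule.comap q.subtype U) = Module.finrank F U := by
  classical
  set φ : U →ₗ[F] p := (p.projectionOnto q h) ∘ₗ U.subtype with hφ
  have hrange : LinearMap.range φ = Submodule.map (p.projectionOnto q h) U := by
    rw [hφ, LinearMap.range_comp, Submodule.range_subtype]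
  have hker : LinearMap.ker φ = Submodule.comap U.subtype q := by
    ext u
    simp only [LinearMap.mem_ker, hφ, LinearMap.comp_apply, Submodule.coe_subtype,
      Submodule.mem_comap]
    exact Submodule.projectionOnto_apply_eq_zero_iff h
  have hrn := LinearMap.finrank_range_add_finrank_ker φ
  rw [hrange, hker] at hrn
  rw [← hrn]
  congr 1
  rw [finrank_comap_subtype, finrank_comap_subtype]
  rw [inf_comm]

end Helpers


theorem sliceRank_directSum_ge (F : Type*) [Field F] {d : ℕ} (hd : 2 ≤ d)
    (V : Fin d → Type*)
    [∀ i, AddCommGroup (V i)] [∀ i, Module F (V i)] [∀ i, FiniteDimensional F (V i)]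
    (W₁ W₂ : ∀ i, Submodule F (V i)) (hcompl : ∀ i, IsCompl (W₁ i) (W₂ i))
    (T₁ : ⨂[F] i, (W₁ i)) (T₂ : ⨂[F] i, (W₂ i)) :
    tensorSliceRank F V
        (PiTensorProduct.map (fun i => (W₁ i).subtype) T₁ +
          PiTensorProduct.map (fun i => (W₂ i).subtype) T₂) ≥
      tensorSliceRank F (fun i => (W₁ i)) T₁ + tensorSliceRank F (fun i => (W₂ i)) T₂ := by
  classical
  set Tbig := PiTensorProduct.map (fun i => (W₁ i).subtype) T₁ +
      PiTensorProduct.map (fun i => (W₂ i).subtype) T₂ with hTbig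
  have hd0 : 0 < d := by omega
  obtain ⟨S, hS, hsum⟩ := exists_min_decomp hd0 Tbig
  choose iF uF hu using hS
  set U : ∀ i, Submodule F (V i) := fun i =>
    Submodule.span F ((Finset.univ.image
      (fun j : {j // iF j = i} => (cast (congrArg V j.2) (uF j.1) : V i))) : Set (V i))
    with hUdef
  have hUmem : ∀ j, uF j ∈ U (iF j) := by
    intro j
    apply Submodule.subset_span
    simp only [Finset.coe_image, Set.mem_image, Finset.mem_coe]
    exact ⟨⟨j, rfl⟩, by simp, by simp⟩
  have hUdim : ∀ i, Module.finrank F (U i) ≤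
      (Finset.univ.filter (fun j => iF j = i)).card := by
    intro i
    refine (finrank_span_finset_le_card _).trans ?_
    refine Finset.card_image_le.trans ?_
    rw [Finset.card_univ, Fintype.card_subtype]
  have hcard : ∑ i, (Finset.univ.filter (fun j => iF j = i)).card
      = tensorSliceRank F V Tbig := by
    have h1 := Finset.sum_card_fiberwise_eq_card_filter Finset.univ Finset.univ iF
    simpa using h1
  set pr1 : ∀ i, V i →ₗ[F] W₁ i := fun i =>
    (W₁ i).projectionOnto (W₂ i) (hcompl i) with hpr1
  set pr2 : ∀ i, V i →ₗ[F] W₂ i := fun i =>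
    (W₂ i).projectionOnto (W₁ i) (hcompl i).symm with hpr2
  set i0 : Fin d := ⟨0, by omega⟩ with hi0
  set i1 : Fin d := ⟨1, by omega⟩ with hi1
  have hne10 : i1 ≠ i0 := by simp [hi0, hi1, Fin.ext_iff]
  obtain ⟨A, hAdef⟩ : ∃ A : ∀ i, Submodule F (W₁ i), ∀ i, A i =
      if i = i0 then Submodule.map (pr1 i) (U i) else Submodule.comap (W₁ i).subtype (U i) :=
    ⟨_, fun i => rfl⟩
  obtain ⟨B, hBdef⟩ : ∃ B : ∀ i, Submodule F (W₂ i), ∀ i, B i =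
      if i = i0 then Submodule.comap (W₂ i).subtype (U i) else Submodule.map (pr2 i) (U i) :=
    ⟨_, fun i => rfl⟩
  have hAB : ∀ i, Module.finrank F (A i) + Module.finrank F (B i)
      = Module.finrank F (U i) := by
    intro i
    by_cases hi : i = i0
    · rw [hAdef i, hBdef i, if_pos hi, if_pos hi]
      exact finrank_proj_add (W₁ i) (W₂ i) (hcompl i) (U i)
    · rw [hAdef i, hBdef i, if_neg hi, if_neg hi]
      rw [add_comm]
      exact finrank_proj_add (W₂ i) (W₁ i) (hcompl i).symm (U i)
  -- bound for T₁
  have hT1 : tensorSliceRank F (fun i => (W₁ i)) T₁ ≤ ∑ i, Module.finrank F (A i) := by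
    apply tensorSliceRank_le_of_vanishing
    intro x hx
    have hexists : ∀ i, ∃ X : Module.Dual F (V i), U i ≤ LinearMap.ker X ∧
        X ∘ₗ (W₁ i).subtype = x i ∧ (i = i0 → X ∘ₗ (W₂ i).subtype = 0) := by
      intro i
      by_cases hi : i = i0
      · refine ⟨(x i) ∘ₗ pr1 i, ?_, ?_, fun _ => ?_⟩
        · intro u hu'
          have hmem : pr1 i u ∈ A i := by
            rw [hAdef i, if_pos hi]
            exact Submodule.mem_map_of_mem hu'
          simpa using hx i hmem
        · ext w
          simp [hpr1, Submodule.projectionOnto_apply_left (hcompl i)]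
        · ext w
          simp [hpr1, Submodule.projectionOnto_apply_of_mem_right (hcompl i) w.2]
      · have hxi : Submodule.comap (W₁ i).subtype (U i) ≤ LinearMap.ker (x i) := by
          intro w hw
          refine hx i ?_
          rw [hAdef i, if_neg hi]
          exact hw
        obtain ⟨X, h1, h2⟩ := exists_dual_extend (W₁ i) (W₂ i) (hcompl i) (U i) (x i) hxi
        exact ⟨X, h1, h2, fun h => absurd h hi⟩
    choose X hX1 hX2 hX3 using hexists
    have hzero : teval X Tbig = 0 := by
      rw [hsum, map_sum]
      apply Finset.sum_eq_zero
      intro j _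
      exact teval_slice_eq_zero X (iF j) (uF j) (hX1 (iF j) (hUmem j)) (S j) (hu j)
    rw [hTbig, map_add, teval_map, teval_map] at hzero
    have hk2 : teval (fun i => (X i).comp ((W₂ i).subtype)) T₂ = 0 :=
      teval_eq_zero_of_exists _ _ i0 (hX3 i0 rfl)
    have hk1 : (fun i => (X i).comp ((W₁ i).subtype)) = x := funext hX2
    rw [hk1, hk2, add_zero] at hzero
    exact hzero
  -- bound for T₂
  have hT2 : tensorSliceRank F (fun i => (W₂ i)) T₂ ≤ ∑ i, Module.finrank F (B i) := by
    apply tensorSliceRank_le_of_vanishing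
    intro y hy
    have hexists : ∀ i, ∃ Y : Module.Dual F (V i), U i ≤ LinearMap.ker Y ∧
        Y ∘ₗ (W₂ i).subtype = y i ∧ (i ≠ i0 → Y ∘ₗ (W₁ i).subtype = 0) := by
      intro i
      by_cases hi : i = i0
      · have hyi : Submodule.comap (W₂ i).subtype (U i) ≤ LinearMap.ker (y i) := by
          intro w hw
          refine hy i ?_
          rw [hBdef i, if_pos hi]
          exact hw
        obtain ⟨Y, h1, h2⟩ := exists_dual_extend (W₂ i) (W₁ i) (hcompl i).symm (U i) (y i) hyi
        exact ⟨Y, h1, h2, fun h => absurd hi h⟩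
      · refine ⟨(y i) ∘ₗ pr2 i, ?_, ?_, fun _ => ?_⟩
        · intro u hu'
          have hmem : pr2 i u ∈ B i := by
            rw [hBdef i, if_neg hi]
            exact Submodule.mem_map_of_mem hu'
          simpa using hy i hmem
        · ext w
          simp [hpr2, Submodule.projectionOnto_apply_left (hcompl i).symm]
        · ext w
          simp [hpr2, Submodule.projectionOnto_apply_of_mem_right (hcompl i).symm w.2]
    choose Y hY1 hY2 hY3 using hexists
    have hzero : teval Y Tbig = 0 := by
      rw [hsum, map_sum]
      apply Finset.sum_eq_zero
      intro j _
      exact teval_slice_eq_zero Y (iF j) (uF j) (hY1 (iF j) (hUmem j)) (S j) (hu j)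
    rw [hTbig, map_add, teval_map, teval_map] at hzero
    have hk1 : teval (fun i => (Y i).comp ((W₁ i).subtype)) T₁ = 0 :=
      teval_eq_zero_of_exists _ _ i1 (hY3 i1 hne10)
    have hk2 : (fun i => (Y i).comp ((W₂ i).subtype)) = y := funext hY2
    rw [hk1, hk2, zero_add] at hzero
    exact hzero
  have hfinal : tensorSliceRank F (fun i => (W₁ i)) T₁ + tensorSliceRank F (fun i => (W₂ i)) T₂
      ≤ tensorSliceRank F V Tbig := by
    calc tensorSliceRank F (fun i => (W₁ i)) T₁ + tensorSliceRank F (fun i => (W₂ i)) T₂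
        ≤ (∑ i, Module.finrank F (A i)) + (∑ i, Module.finrank F (B i)) :=
          Nat.add_le_add hT1 hT2
      _ = ∑ i, (Module.finrank F (A i) + Module.finrank F (B i)) :=
          (Finset.sum_add_distrib).symm
      _ = ∑ i, Module.finrank F (U i) := Finset.sum_congr rfl (fun i _ => hAB i)
      _ ≤ ∑ i, (Finset.univ.filter (fun j => iF j = i)).card :=
          Finset.sum_le_sum (fun i _ => hUdim i)
      _ = tensorSliceRank F V Tbig := hcard
  exact hfinal
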